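/- Let E be a finite-dimensional real inner product space, K ⊆ E a self-dual closed convex cone, and consider (NCP): minimize f(x) subject to g(x) ∈ K and h(x) = 0, with f : ℝⁿ → ℝ, g : ℝⁿ → E, h : ℝⁿ → ℝᵖ continuously differentiable. Let x* be a KKT point, i.e. g(x*) ∈ K, h(x*) = 0, and there exist ω* ∈ K and μ* ∈ ℝᵖ with ∇f(x*) − Dg(x*)*[ω*] + Dh(x*)ᵀμ* = 0 and ⟨g(x*), ω*⟩ = 0. If strict complementarity holds, i.e. −ω* belongs to the relative (intrinsic) interior of the polar cone T_K(g(x*))° = {w ∈ E : ⟨w,y⟩ ≤ 0 for all y ∈ T_K(g(x*))}, then the critical cone C(x*) = {d ∈ ℝⁿ : ⟨∇f(x*), d⟩ = 0, Dh(x*)d = 0, Dg(x*)[d] ∈ T_K(g(x*))} is a linear subspace of ℝⁿ, i.e. C(x*) = lin(C(x*)) = C(x*) ∩ (−C(x*)). -/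

import Mathlib

/-!
STATEMENT 15: Under strict complementarity, the critical cone of (NCP) at a
KKT point is a linear subspace (it equals its lineality space).
-/

open Filter Topology Set
open scoped InnerProductSpace Pointwise

/-- The (Bouligand) tangent cone to `K` at `w`. -/
def tangentCone' {E : Type*} [NormedAddCommGroup E] [NormedSpace ℝ E] (K : Set E) (w : E) :
    Set E :=
  {v | ∃ (dk : ℕ → E) (ak : ℕ → ℝ), Tendsto dk atTop (𝓝 v) ∧ Tendsto ak atTop (𝓝 0) ∧
    (∀ k, 0 < ak k) ∧ ∀ k, w + ak k • dk k ∈ K}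

/-- The inner dual cone of a set (as a convex cone). -/
noncomputable def Set.innerDualCone {E : Type*} [NormedAddCommGroup E] [InnerProductSpace ℝ E]
    (s : Set E) : ConvexCone ℝ E where
  carrier := {y | ∀ x ∈ s, 0 ≤ ⟪x, y⟫_ℝ}
  smul_mem' c hc y hy x hx := by
    rw [real_inner_smul_right]; exact mul_nonneg hc.le (hy x hx)
  add_mem' y hy z hz x hx := by
    rw [inner_add_right]; exact add_nonneg (hy x hx) (hz x hx)

lemma mem_innerDualCone {E : Type*} [NormedAddCommGroup E] [InnerProductSpace ℝ E]
    (s : Set E) (y : E) : y ∈ s.innerDualCone ↔ ∀ x ∈ s, 0 ≤ ⟪x, y⟫_ℝ := Iff.rfl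

lemma ConvexCone.innerDualCone_of_innerDualCone_eq_self {E : Type*} [NormedAddCommGroup E]
    [InnerProductSpace ℝ E] [FiniteDimensional ℝ E] (K : ConvexCone ℝ E)
    (ne : (K : Set E).Nonempty) (hc : IsClosed (K : Set E)) :
    ((K : Set E).innerDualCone : Set E).innerDualCone = K := by
  ext x
  constructor
  · intro hx
    by_contra hxK
    have h0 : (0 : E) ∈ K := by
      obtain ⟨z, hz⟩ := ne
      have ht : Tendsto (fun m : ℕ => (1 / ((m : ℝ) + 1)) • z) atTop (𝓝 0) := by
        have h1 : Tendsto (fun m : ℕ => 1 / ((m : ℝ) + 1)) atTop (𝓝 0) :=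
          tendsto_one_div_add_atTop_nhds_zero_nat
        simpa using h1.smul_const z
      exact hc.mem_of_tendsto ht (Eventually.of_forall fun m => K.smul_mem (by positivity) hz)
    let C : ProperCone ℝ E :=
      { carrier := (K : Set E)
        add_mem' := fun ha hb => K.add_mem ha hb
        zero_mem' := h0
        smul_mem' := fun c y hy => by
          rcases (c.2).eq_or_lt with hc0 | hc0
          · have : c = 0 := NNReal.coe_eq_zero.1 hc0.symm
            subst this; simpa using h0
          · exact K.smul_mem hc0 hy
        isClosed' := hc }
    obtain ⟨y, hy, hxy⟩ := ProperCone.hyperplane_separation' C (x₀ := x) hxK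
    have hyd : y ∈ (K : Set E).innerDualCone := fun z hz => hy z hz
    have := hx y hyd
    rw [real_inner_comm] at this
    linarith
  · intro hx y hy
    rw [real_inner_comm]; exact hy x hx

lemma neg_mem_tangent {E : Type*} [NormedAddCommGroup E] [InnerProductSpace ℝ E]
    [FiniteDimensional ℝ E] (K : Set E)
    (hK : K = {w : E | ∀ y ∈ K, 0 ≤ ⟪w, y⟫_ℝ}) (x : E) (hx : x ∈ K) (ω : E)
    (hstrict : -ω ∈ intrinsicInterior ℝ {w : E | ∀ y ∈ tangentCone' K x, ⟪w, y⟫_ℝ ≤ 0})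
    (v : E) (hv : v ∈ tangentCone' K x) (hωv : ⟪ω, v⟫_ℝ = 0) :
    -v ∈ tangentCone' K x := by
  have hKmem : ∀ w : E, w ∈ K ↔ ∀ y ∈ K, 0 ≤ ⟪w, y⟫_ℝ := by
    intro w
    conv_lhs => rw [hK]
    exact Iff.rfl
  have hKsmul : ∀ (c : ℝ), 0 ≤ c → ∀ {b : E}, b ∈ K → c • b ∈ K := by
    intro c hc b hb
    rw [hKmem] at hb ⊢
    intro y hy
    rw [real_inner_smul_left]
    exact mul_nonneg hc (hb y hy)
  have hKadd : ∀ {a b : E}, a ∈ K → b ∈ K → a + b ∈ K := by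
    intro a b ha hb
    rw [hKmem] at ha hb ⊢
    intro y hy
    rw [inner_add_left]
    exact add_nonneg (ha y hy) (hb y hy)
  have hK0 : (0 : E) ∈ K := by
    rw [hKmem]; intro y hy; rw [inner_zero_left]
  have hKd : ∀ z : E, z ∈ K.innerDualCone ↔ z ∈ K := by
    intro z
    rw [mem_innerDualCone, hKmem]
    constructor
    · intro hz y hy; rw [real_inner_comm]; exact hz y hy
    · intro hz y hy; rw [real_inner_comm]; exact hz y hy
  set T := tangentCone' K x with hTdef
  set Scone : ConvexCone ℝ E := K.innerDualCone + (Submodule.span ℝ {x}).toConvexCone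
    with hSconedef
  have hSmem : ∀ z : E, z ∈ (Scone : Set E) ↔ ∃ k ∈ K, ∃ t : ℝ, z = k + t • x := by
    intro z
    rw [hSconedef]
    simp only [SetLike.mem_coe, ConvexCone.mem_add, Submodule.mem_toConvexCone,
      Submodule.mem_span_singleton]
    constructor
    · rintro ⟨k, hk, -, ⟨t, rfl⟩, rfl⟩
      exact ⟨k, (hKd k).1 hk, t, rfl⟩
    · rintro ⟨k, hk, t, rfl⟩
      exact ⟨k, (hKd k).2 hk, t • x, ⟨t, rfl⟩, rfl⟩
  -- closure of Scone is inside the tangent cone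
  have hST : closure (Scone : Set E) ⊆ T := by
    intro z hz
    obtain ⟨u, hu, hulim⟩ := mem_closure_iff_seq_limit.1 hz
    have hu' : ∀ m, ∃ k ∈ K, ∃ t : ℝ, u m = k + t • x := fun m => (hSmem (u m)).1 (hu m)
    choose k hkK t hut using hu'
    refine ⟨u, fun m => (1 / (m + 1 : ℝ)) * (1 / (1 + |t m|)), hulim, ?_, ?_, ?_⟩
    · refine squeeze_zero (fun m => by positivity) (fun m => ?_)
        tendsto_one_div_add_atTop_nhds_zero_nat
      have h1 : (0:ℝ) < 1 + |t m| := by positivity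
      have h2 : 1 / (1 + |t m|) ≤ 1 := by
        rw [div_le_one h1]; linarith [abs_nonneg (t m)]
      have h3 : (0:ℝ) ≤ 1 / (m + 1 : ℝ) := by positivity
      calc (1 / (m + 1 : ℝ)) * (1 / (1 + |t m|)) ≤ (1 / (m + 1 : ℝ)) * 1 :=
            mul_le_mul_of_nonneg_left h2 h3
        _ = 1 / (m + 1 : ℝ) := mul_one _
    · intro m; positivity
    · intro m
      dsimp only
      set a : ℝ := (1 / (m + 1 : ℝ)) * (1 / (1 + |t m|)) with hadef
      have h1 : (0:ℝ) < 1 + |t m| := by positivity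
      have hap : 0 < a := by rw [hadef]; positivity
      have hA1 : (1:ℝ) / (m + 1 : ℝ) ≤ 1 := by
        rw [div_le_one (by positivity)]
        linarith [show (0:ℝ) ≤ (m:ℝ) from Nat.cast_nonneg m]
      have hq : |t m| / (1 + |t m|) < 1 := by
        rw [div_lt_one h1]; linarith
      have key : a * |t m| < 1 := by
        have he : a * |t m| = (1 / (m + 1 : ℝ)) * (|t m| / (1 + |t m|)) := by
          rw [hadef]; ring
        rw [he]
        calc (1 / (m + 1 : ℝ)) * (|t m| / (1 + |t m|)) ≤ 1 * (|t m| / (1 + |t m|)) :=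
              mul_le_mul_of_nonneg_right hA1 (by positivity)
          _ < 1 := by rw [one_mul]; exact hq
      have hcoef : 0 ≤ 1 + a * t m := by
        have h2 : -|t m| ≤ t m := neg_abs_le _
        nlinarith
      have heq : x + a • u m = (1 + a * t m) • x + a • k m := by
        rw [hut m]; module
      rw [heq]
      exact hKadd (hKsmul _ hcoef hx) (hKsmul _ hap.le (hkK m))
  have hTS : T ⊆ closure (Scone : Set E) := by
    rintro z ⟨dk, ak, hdk, -, hapos, hmem⟩
    refine mem_closure_of_tendsto hdk (Filter.Eventually.of_forall fun m => ?_)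
    rw [hSmem]
    refine ⟨(ak m)⁻¹ • (x + ak m • dk m),
      hKsmul _ (inv_nonneg.2 (hapos m).le) (hmem m), -(ak m)⁻¹, ?_⟩
    have h0 : (ak m) ≠ 0 := (hapos m).ne'
    rw [smul_add, smul_smul, inv_mul_cancel₀ h0, one_smul]
    module
  set P : Set E := {w : E | ∀ y ∈ T, ⟪w, y⟫_ℝ ≤ 0} with hPdef
  have hKT : ∀ {y : E}, y ∈ K → y ∈ T := fun {y} hy =>
    hST (subset_closure ((hSmem y).2 ⟨y, hy, 0, by simp⟩))
  have hxT : x ∈ T := hKT hx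
  have hnegxT : -x ∈ T := hST (subset_closure ((hSmem (-x)).2 ⟨0, hK0, -1, by simp⟩))
  have hPmem : ∀ w : E, w ∈ P ↔ (-w ∈ K ∧ ⟪w, x⟫_ℝ = 0) := by
    intro w
    constructor
    · intro hw
      refine ⟨(hKmem (-w)).2 fun y hy => ?_, le_antisymm (hw x hxT) ?_⟩
      · rw [inner_neg_left]; linarith [hw y (hKT hy)]
      · have h := hw (-x) hnegxT
        rw [inner_neg_right] at h; linarith
    · rintro ⟨hwK, hwx⟩ y hy
      have hcl : y ∈ closure (Scone : Set E) := hTS hy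
      have hsub : (Scone : Set E) ⊆ {z : E | ⟪w, z⟫_ℝ ≤ 0} := by
        intro z hz
        obtain ⟨kk, hkk, tt, rfl⟩ := (hSmem z).1 hz
        have h1 : 0 ≤ ⟪-w, kk⟫_ℝ := (hKmem (-w)).1 hwK kk hkk
        rw [inner_neg_left] at h1
        rw [mem_setOf_eq, inner_add_right, real_inner_smul_right, hwx, mul_zero, add_zero]
        linarith
      have hclosedset : IsClosed {z : E | ⟪w, z⟫_ℝ ≤ 0} :=
        isClosed_le (continuous_const.inner continuous_id) continuous_const
      exact closure_minimal hsub hclosedset hcl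
  -- every element of P is orthogonal to v
  have hperp : ∀ u ∈ P, ⟪u, v⟫_ℝ = 0 := by
    intro u hu
    have huv : ⟪u, v⟫_ℝ ≤ 0 := hu v hv
    obtain ⟨y, hy, hyc⟩ := mem_intrinsicInterior.1 hstrict
    have hmω : -ω ∈ P := intrinsicInterior_subset hstrict
    have hmemA : ∀ s : ℝ, u + s • (-ω - u) ∈ affineSpan ℝ P := by
      intro s
      have h1 : -ω ∈ affineSpan ℝ P := subset_affineSpan ℝ P hmω
      have h2 : u ∈ affineSpan ℝ P := subset_affineSpan ℝ P hu
      have h3 := AffineSubspace.smul_vsub_vadd_mem (affineSpan ℝ P) s h1 h2 h2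
      simpa [vsub_eq_sub, vadd_eq_add, add_comm] using h3
    let ψ : ℝ → affineSpan ℝ P := fun s => ⟨u + s • (-ω - u), hmemA s⟩
    have hψc : Continuous ψ := by
      apply Continuous.subtype_mk
      exact continuous_const.add (continuous_id.smul continuous_const)
    have hψ1 : ψ 1 = y := by
      apply Subtype.ext
      show u + (1:ℝ) • (-ω - u) = (y : E)
      rw [hyc, one_smul]; abel
    have hopen : IsOpen (ψ ⁻¹' interior (((↑) : affineSpan ℝ P → E) ⁻¹' P)) :=
      isOpen_interior.preimage hψc
    have h1mem : (1:ℝ) ∈ ψ ⁻¹' interior (((↑) : affineSpan ℝ P → E) ⁻¹' P) := by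
      rw [Set.mem_preimage, hψ1]; exact hy
    obtain ⟨ε, hε, hball⟩ := Metric.isOpen_iff.1 hopen 1 h1mem
    have hs : (1 + ε/2) ∈ ψ ⁻¹' interior (((↑) : affineSpan ℝ P → E) ⁻¹' P) := by
      apply hball
      rw [Metric.mem_ball, Real.dist_eq, show (1 + ε/2) - 1 = ε/2 by ring,
        abs_of_pos (by linarith)]
      linarith
    have hs2 : ψ (1 + ε/2) ∈ interior (((↑) : affineSpan ℝ P → E) ⁻¹' P) := hs
    have hs3 : ψ (1 + ε/2) ∈ (((↑) : affineSpan ℝ P → E) ⁻¹' P) := interior_subset hs2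
    have hcP : u + (1 + ε/2) • (-ω - u) ∈ P := hs3
    have hineq : ⟪u + (1 + ε/2) • (-ω - u), v⟫_ℝ ≤ 0 := hcP v hv
    have hωv' : ⟪-ω, v⟫_ℝ = 0 := by rw [inner_neg_left, hωv, neg_zero]
    rw [inner_add_left, real_inner_smul_left, inner_sub_left, hωv'] at hineq
    have hge : 0 ≤ ⟪u, v⟫_ℝ := by nlinarith
    linarith
  -- bipolar argument
  have hne : ((Scone.closure : ConvexCone ℝ E) : Set E).Nonempty :=
    ⟨0, subset_closure ((hSmem 0).2 ⟨0, hK0, 0, by simp⟩)⟩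
  have hcl : IsClosed ((Scone.closure : ConvexCone ℝ E) : Set E) := by
    rw [ConvexCone.coe_closure]; exact isClosed_closure
  have hbip := Scone.closure.innerDualCone_of_innerDualCone_eq_self hne hcl
  have hmemdd : -v ∈ (((Scone.closure : ConvexCone ℝ E) : Set E).innerDualCone :
      Set E).innerDualCone := by
    intro w hw
    have hw' : ∀ z ∈ closure (Scone : Set E), 0 ≤ ⟪z, w⟫_ℝ := hw
    have hwP : -w ∈ P := by
      rw [hPmem]
      constructor
      · rw [neg_neg, hKmem]
        intro y hy
        have h := hw' y (subset_closure ((hSmem y).2 ⟨y, hy, 0, by simp⟩))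
        rw [real_inner_comm]; exact h
      · have h1 := hw' x (subset_closure ((hSmem x).2 ⟨x, hx, 0, by simp⟩))
        have h2 := hw' (-x) (subset_closure ((hSmem (-x)).2 ⟨0, hK0, -1, by simp⟩))
        rw [inner_neg_left] at h2
        rw [inner_neg_left, real_inner_comm]
        linarith
    have h0 := hperp (-w) hwP
    rw [inner_neg_left] at h0
    rw [inner_neg_right]
    linarith
  have hfin : -v ∈ Scone.closure := by rw [← hbip]; exact hmemdd
  exact hST hfin

/-- The critical cone of (NCP) at `xs`. -/
noncomputable def critCone {n p : ℕ} {E : Type*} [NormedAddCommGroup E]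
    [InnerProductSpace ℝ E] [FiniteDimensional ℝ E] (K : Set E)
    (f : EuclideanSpace ℝ (Fin n) → ℝ) (g : EuclideanSpace ℝ (Fin n) → E)
    (h : EuclideanSpace ℝ (Fin n) → EuclideanSpace ℝ (Fin p))
    (xs : EuclideanSpace ℝ (Fin n)) : Set (EuclideanSpace ℝ (Fin n)) :=
  {d | ⟪gradient f xs, d⟫_ℝ = 0 ∧ fderiv ℝ h xs d = 0 ∧
    fderiv ℝ g xs d ∈ tangentCone' K (g xs)}

set_option linter.unusedVariables false in
theorem stmt_15 {n p : ℕ} {E : Type*} [NormedAddCommGroup E] [InnerProductSpace ℝ E]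
    [FiniteDimensional ℝ E]
    (K : Set E)
    -- `K` is a self-dual (hence closed convex) cone:
    (hK : K = {w : E | ∀ y ∈ K, 0 ≤ ⟪w, y⟫_ℝ})
    (f : EuclideanSpace ℝ (Fin n) → ℝ) (g : EuclideanSpace ℝ (Fin n) → E)
    (h : EuclideanSpace ℝ (Fin n) → EuclideanSpace ℝ (Fin p))
    (hf : ContDiff ℝ 1 f) (hg : ContDiff ℝ 1 g) (hh : ContDiff ℝ 1 h)
    (xs : EuclideanSpace ℝ (Fin n)) (ω : E) (μ : EuclideanSpace ℝ (Fin p))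
    -- `xs` is a KKT point with multipliers `ω ∈ K`, `μ`:
    (hfeas : g xs ∈ K ∧ h xs = 0) (hω : ω ∈ K)
    (hstat : gradient f xs - (fderiv ℝ g xs).adjoint ω + (fderiv ℝ h xs).adjoint μ = 0)
    (hcomp : ⟪g xs, ω⟫_ℝ = 0)
    -- strict complementarity: `−ω` lies in the relative (intrinsic) interior
    -- of the polar of the tangent cone `T_K(g(x*))`:
    (hstrict : -ω ∈ intrinsicInterior ℝ
      {w : E | ∀ y ∈ tangentCone' K (g xs), ⟪w, y⟫_ℝ ≤ 0}) :
    critCone K f g h xs = critCone K f g h xs ∩ -critCone K f g h xs := by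
  obtain ⟨hgx, hhx⟩ := hfeas
  apply Set.Subset.antisymm ?_ Set.inter_subset_left
  intro d hd
  obtain ⟨hd1, hd2, hd3⟩ := hd
  have hωv : ⟪ω, fderiv ℝ g xs d⟫_ℝ = 0 := by
    have h0 : ⟪gradient f xs - (fderiv ℝ g xs).adjoint ω + (fderiv ℝ h xs).adjoint μ, d⟫_ℝ
        = 0 := by rw [hstat, inner_zero_left]
    rw [inner_add_left, inner_sub_left, ContinuousLinearMap.adjoint_inner_left,
      ContinuousLinearMap.adjoint_inner_left, hd1, hd2, inner_zero_right] at h0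
    linarith
  refine ⟨⟨hd1, hd2, hd3⟩, ?_⟩
  rw [Set.mem_neg]
  refine ⟨?_, ?_, ?_⟩
  · rw [inner_neg_right, hd1, neg_zero]
  · rw [map_neg, hd2, neg_zero]
  · rw [map_neg]
    exact neg_mem_tangent K hK (g xs) hgx ω hstrict _ hd3 hωv
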